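/- arXiv:2408.08439 — 3 statements merged into one kernel-verified Lean document; each statement's English description precedes it below -/
import Mathlib

section
/- If a vertex ordering π of K_{b,n−b} achieves mLogGapA(K_{b,n−b}, π) = 1, then π places the b center vertices on consecutive indices (assuming b ≥ 2 and n − b ≥ 2). -/
open Finset
open scoped Classical

/-- Sum of `log₂(1 + gap)` over consecutive gaps of a (sorted) list of indices. -/
noncomputable def gapTotal (l : List ℕ) : ℝ :=
  ((l.zip l.tail).map (fun p => Real.logb 2 (1 + ((p.2 - p.1 : ℕ) : ℝ)))).sum

/-- The contribution of vertex `v` to `m * mLogGapA`: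
`1 + Σ_{i=2}^{d(v)} log₂(1 + π(u_i) - π(u_{i-1}))` with neighbors sorted by `π`. -/
noncomputable def vertexGap {V : Type*} [Fintype V] (G : SimpleGraph V) (π : V → ℕ) (v : V) : ℝ :=
  1 + gapTotal (((G.neighborFinset v).image π).sort (· ≤ ·))

/-- `mLogGapA(G, π)`, the average gap measure. -/
noncomputable def mLogGapA {V : Type*} [Fintype V] (G : SimpleGraph V) (π : V → ℕ) : ℝ :=
  (∑ v : V, vertexGap G π v) / (2 * (G.edgeFinset.card : ℝ))

/-- `mLogA(G, π)`, the average neighbor distance measure. -/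
noncomputable def mLogA {V : Type*} [Fintype V] (G : SimpleGraph V) (π : V → ℕ) : ℝ :=
  (∑ v : V, ∑ u ∈ G.neighborFinset v, Real.logb 2 (1 + |(π u : ℝ) - (π v : ℝ)|)) /
    (2 * (G.edgeFinset.card : ℝ))

lemma gapTotal_nil : gapTotal [] = 0 := by simp [gapTotal]

lemma gapTotal_single (a : ℕ) : gapTotal [a] = 0 := by simp [gapTotal]

lemma gapTotal_cons (a c : ℕ) (t : List ℕ) :
    gapTotal (a :: c :: t) = Real.logb 2 (1 + ((c - a : ℕ) : ℝ)) + gapTotal (c :: t) := by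
  simp [gapTotal]

lemma one_le_logb {g : ℕ} (hg : 1 ≤ g) : 1 ≤ Real.logb 2 (1 + (g : ℝ)) := by
  have h2 : (2 : ℝ) ≤ 1 + (g : ℝ) := by
    have : (1 : ℝ) ≤ g := by exact_mod_cast hg
    linarith
  calc (1 : ℝ) = Real.logb 2 2 := (Real.logb_self_eq_one (by norm_num)).symm
    _ ≤ Real.logb 2 (1 + (g : ℝ)) :=
      Real.logb_le_logb_of_le (by norm_num) (by norm_num) (by linarith)

lemma gapA (t : List ℕ) : ∀ a : ℕ, (a :: t).Chain' (· < ·) →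
    (t.length : ℝ) ≤ gapTotal (a :: t) := by
  induction t with
  | nil => intro a _; simp [gapTotal_single]
  | cons c t ih =>
    intro a h
    have h1 : a < c := (List.isChain_cons_cons.mp h).1
    have h2 := (List.isChain_cons_cons.mp h).2
    have hlog := one_le_logb (g := c - a) (by omega)
    have := ih c h2
    rw [gapTotal_cons]
    simp only [List.length_cons]
    push_cast
    linarith

lemma gapB (t : List ℕ) : ∀ a : ℕ, (a :: t).Chain' (· < ·) →
    gapTotal (a :: t) = (t.length : ℝ) →
    ∀ x, x ∈ a :: t ↔ a ≤ x ∧ x < a + t.length + 1 := by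
  induction t with
  | nil => intro a _ _ x; simp; omega
  | cons c t ih =>
    intro a h he x
    have h1 : a < c := (List.isChain_cons_cons.mp h).1
    have h2 := (List.isChain_cons_cons.mp h).2
    rw [gapTotal_cons] at he
    have hA := gapA t c h2
    have hlog1 : 1 ≤ Real.logb 2 (1 + ((c - a : ℕ) : ℝ)) := one_le_logb (by omega)
    have hlen : (((c :: t).length : ℝ)) = (t.length : ℝ) + 1 := by
      simp only [List.length_cons]; push_cast; ring
    rw [hlen] at he
    have heq1 : Real.logb 2 (1 + ((c - a : ℕ) : ℝ)) = 1 := by linarith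
    have heq2 : gapTotal (c :: t) = (t.length : ℝ) := by linarith
    have hca : c = a + 1 := by
      have hpos : (0 : ℝ) < 1 + ((c - a : ℕ) : ℝ) := by positivity
      have := Real.rpow_logb (b := 2) (x := 1 + ((c - a : ℕ) : ℝ)) (by norm_num) (by norm_num) hpos
      rw [heq1, Real.rpow_one] at this
      have : ((c - a : ℕ) : ℝ) = 1 := by linarith
      have : c - a = 1 := by exact_mod_cast this
      omega
    have hih := ih c h2 heq2
    subst hca
    rw [List.mem_cons, hih x]
    simp only [List.length_cons]
    omega

theorem stmt4 (n b : ℕ) (hb : 2 ≤ b) (hnb : 2 ≤ n - b)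
    (π : (Fin b ⊕ Fin (n - b)) ≃ Fin n)
    (h : mLogGapA (completeBipartiteGraph (Fin b) (Fin (n - b))) (fun v => (π v : ℕ)) = 1) :
    ∃ k, (Finset.univ.image fun i : Fin b => (π (Sum.inl i) : ℕ)) = Finset.Ico k (k + b) := by
  classical
  set G := completeBipartiteGraph (Fin b) (Fin (n - b)) with hG
  set π' : (Fin b ⊕ Fin (n - b)) → ℕ := fun v => (π v : ℕ) with hπ'
  have hinj : Function.Injective π' := fun x y hxy => π.injective (Fin.val_injective hxy)
  -- positive degree everywhere
  have hdegpos : ∀ v, 0 < G.degree v := by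
    intro v
    rw [SimpleGraph.degree_pos_iff_exists_adj]
    cases v with
    | inl i => exact ⟨Sum.inr ⟨0, by omega⟩, by simp [hG]⟩
    | inr j => exact ⟨Sum.inl ⟨0, by omega⟩, by simp [hG]⟩
  -- the per-vertex lower bound
  have key : ∀ v, (G.degree v : ℝ) ≤ vertexGap G π' v := by
    intro v
    have hlen : (((G.neighborFinset v).image π').sort (· ≤ ·)).length = G.degree v := by
      rw [Finset.length_sort, Finset.card_image_of_injective _ hinj]; rfl
    have hch : (((G.neighborFinset v).image π').sort (· ≤ ·)).Chain' (· < ·) :=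
      (Finset.sortedLT_sort _).isChain
    rcases hl : ((G.neighborFinset v).image π').sort (· ≤ ·) with _ | ⟨a, t⟩
    · exfalso
      rw [hl] at hlen
      simp only [List.length_nil] at hlen
      have := hdegpos v
      omega
    · rw [hl] at hlen hch
      have := gapA t a hch
      unfold vertexGap
      rw [hl]
      have : (G.degree v : ℝ) = (t.length : ℝ) + 1 := by
        rw [← hlen]; simp only [List.length_cons]; push_cast; ring
      linarith
  -- total sums
  have hEpos : 0 < G.edgeFinset.card := by
    refine Finset.card_pos.mpr ⟨s(Sum.inl ⟨0, by omega⟩, Sum.inr ⟨0, by omega⟩), ?_⟩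
    rw [SimpleGraph.mem_edgeFinset]
    simp [hG]
  have hsumdeg : ∑ v, (G.degree v : ℝ) = 2 * (G.edgeFinset.card : ℝ) := by
    have := SimpleGraph.sum_degrees_eq_twice_card_edges G
    exact_mod_cast congrArg (fun k : ℕ => (k : ℝ)) this
  have hsum : ∑ v, vertexGap G π' v = 2 * (G.edgeFinset.card : ℝ) := by
    have hne : (2 * (G.edgeFinset.card : ℝ)) ≠ 0 := by positivity
    have h2 := h
    unfold mLogGapA at h2
    exact (div_eq_one_iff_eq hne).mp h2
  have heach : ∀ v, vertexGap G π' v = (G.degree v : ℝ) := by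
    have := (Finset.sum_eq_sum_iff_of_le (s := (Finset.univ : Finset (Fin b ⊕ Fin (n - b))))
      (f := fun v => (G.degree v : ℝ)) (g := fun v => vertexGap G π' v)
      (fun v _ => key v)).mp (by rw [hsumdeg, hsum])
    intro v; exact (this v (Finset.mem_univ v)).symm
  -- focus on one peripheral vertex
  set j₀ : Fin (n - b) := ⟨0, by omega⟩
  have hN : G.neighborFinset (Sum.inr j₀) = Finset.univ.image Sum.inl := by
    ext u
    cases u <;> simp [SimpleGraph.mem_neighborFinset, hG]
  have himg : (G.neighborFinset (Sum.inr j₀)).image π'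
      = Finset.univ.image fun i : Fin b => (π (Sum.inl i) : ℕ) := by
    rw [hN, Finset.image_image]; rfl
  have hdeg : G.degree (Sum.inr j₀) = b := by
    have h0 : G.degree (Sum.inr j₀) = (G.neighborFinset (Sum.inr j₀)).card := rfl
    rw [h0, hN, Finset.card_image_of_injective _ Sum.inl_injective,
      Finset.card_univ, Fintype.card_fin]
  -- extract the sorted list
  set S := (G.neighborFinset (Sum.inr j₀)).image π' with hS
  have hlen : (S.sort (· ≤ ·)).length = b := by
    rw [Finset.length_sort, hS, Finset.card_image_of_injective _ hinj]; exact hdeg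
  have hch : (S.sort (· ≤ ·)).Chain' (· < ·) := (Finset.sortedLT_sort _).isChain
  have hvg : vertexGap G π' (Sum.inr j₀) = (b : ℝ) := by
    rw [heach, hdeg]
  rcases hl : S.sort (· ≤ ·) with _ | ⟨a, t⟩
  · rw [hl] at hlen; simp only [List.length_nil] at hlen; omega
  · rw [hl] at hlen hch
    have hg : gapTotal (a :: t) = (t.length : ℝ) := by
      have : vertexGap G π' (Sum.inr j₀) = 1 + gapTotal (a :: t) := by
        unfold vertexGap; rw [← hS, hl]
      rw [hvg] at this
      have hb' : (b : ℝ) = (t.length : ℝ) + 1 := by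
        have : t.length + 1 = b := by simpa using hlen
        push_cast [← this]; ring
      linarith
    have hmem := gapB t a hch hg
    refine ⟨a, ?_⟩
    rw [← himg]
    ext x
    rw [Finset.mem_Ico]
    have hx : x ∈ S ↔ x ∈ a :: t := by rw [← hl]; exact (Finset.mem_sort _).symm
    rw [hx, hmem x]
    simp only [List.length_cons] at hlen
    omega
end

section
/- For the non-circulant band graph B(n, b) (i adjacent to j iff 1 ≤ |i − j| ≤ b, n > 2b), the identity ordering minimizes mLogA over all orderings: mLogA(B(n,b), id) ≤ mLogA(B(n,b), π) for every permutation π. -/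
open Finset
open scoped Classical

/-- the non-circulant band graph `B(n, b)`: `i ~ j` iff `1 ≤ |i - j| ≤ b`. -/
def bandGraph (n b : ℕ) : SimpleGraph (Fin n) :=
  SimpleGraph.fromRel
    (fun i j => 1 ≤ ((i : ℤ) - (j : ℤ)).natAbs ∧ ((i : ℤ) - (j : ℤ)).natAbs ≤ b)

noncomputable def gfun (d : ℕ) : ℝ := Real.logb 2 (1 + (d : ℝ))

lemma gfun_mono : Monotone gfun := by
  intro x y hxy
  unfold gfun
  have hx : (0:ℝ) < 1 + x := by positivity
  have hxy' : (x:ℝ) ≤ (y:ℝ) := Nat.cast_le.mpr hxy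
  exact Real.logb_le_logb_of_le (by norm_num) hx (by linarith)

lemma bandGraph_adj (n b : ℕ) (i j : Fin n) :
    (bandGraph n b).Adj i j ↔
      1 ≤ ((i : ℤ) - (j : ℤ)).natAbs ∧ ((i : ℤ) - (j : ℤ)).natAbs ≤ b := by
  rw [bandGraph, SimpleGraph.fromRel_adj]
  constructor
  · rintro ⟨hne, h | h⟩
    · exact h
    · rwa [show ((i:ℤ) - j).natAbs = ((j:ℤ) - i).natAbs by omega]
  · intro h
    refine ⟨fun hij => ?_, Or.inl h⟩
    subst hij
    simp at h

lemma core_lemma {n : ℕ} (b : ℕ) (A : Finset (Fin n × Fin n))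
    (d1 d2 : Fin n × Fin n → ℕ)
    (h1 : ∀ p ∈ A, 1 ≤ d1 p ∧ d1 p ≤ b)
    (h2 : ∀ p ∈ A, 1 ≤ d2 p)
    (hcount : ∀ k ∈ Finset.Icc 1 b,
      (A.filter (fun p => d2 p = k)).card ≤ (A.filter (fun p => d1 p = k)).card) :
    ∑ p ∈ A, gfun (d1 p) ≤ ∑ p ∈ A, gfun (d2 p) := by
  have key : ∑ p ∈ A, (gfun (d1 p) - gfun b) ≤ ∑ p ∈ A, (gfun (d2 p) - gfun b) := by
    have maps1 : ∀ p ∈ A, d1 p ∈ Finset.Icc 1 b := fun p hp => by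
      simpa [Finset.mem_Icc] using h1 p hp
    have LHS : ∑ p ∈ A, (gfun (d1 p) - gfun b)
        = ∑ k ∈ Finset.Icc 1 b,
            ((A.filter (fun p => d1 p = k)).card : ℝ) * (gfun k - gfun b) := by
      rw [← Finset.sum_fiberwise_of_maps_to maps1 (fun p => gfun (d1 p) - gfun b)]
      refine Finset.sum_congr rfl fun k _ => ?_
      have hc : ∀ p ∈ A.filter (fun p => d1 p = k),
          gfun (d1 p) - gfun b = gfun k - gfun b := by
        intro p hp; rw [(Finset.mem_filter.mp hp).2]
      rw [Finset.sum_congr rfl hc, Finset.sum_const, nsmul_eq_mul]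
    have RHS1 : ∑ p ∈ A.filter (fun p => d2 p ≤ b), (gfun (d2 p) - gfun b)
        ≤ ∑ p ∈ A, (gfun (d2 p) - gfun b) := by
      apply Finset.sum_le_sum_of_subset_of_nonneg (Finset.filter_subset _ _)
      intro p hp hnp
      have : b ≤ d2 p := by
        by_contra h
        exact hnp (Finset.mem_filter.mpr ⟨hp, by omega⟩)
      have := gfun_mono this
      linarith
    have RHS2 : ∑ p ∈ A.filter (fun p => d2 p ≤ b), (gfun (d2 p) - gfun b)
        = ∑ k ∈ Finset.Icc 1 b,
            (((A.filter (fun p => d2 p ≤ b)).filter (fun p => d2 p = k)).card : ℝ)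
              * (gfun k - gfun b) := by
      rw [← Finset.sum_fiberwise_of_maps_to
        (t := Finset.Icc 1 b) (g := fun p => d2 p)
        (fun p hp => by
          have h := Finset.mem_filter.mp hp
          exact Finset.mem_Icc.mpr ⟨h2 p h.1, h.2⟩)
        (fun p => gfun (d2 p) - gfun b)]
      refine Finset.sum_congr rfl fun k _ => ?_
      have hc : ∀ p ∈ (A.filter (fun p => d2 p ≤ b)).filter (fun p => d2 p = k),
          gfun (d2 p) - gfun b = gfun k - gfun b := by
        intro p hp; rw [(Finset.mem_filter.mp hp).2]
      rw [Finset.sum_congr rfl hc, Finset.sum_const, nsmul_eq_mul]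
    have filt_eq : ∀ k ∈ Finset.Icc 1 b,
        (A.filter (fun p => d2 p ≤ b)).filter (fun p => d2 p = k)
          = A.filter (fun p => d2 p = k) := by
      intro k hk
      rw [Finset.filter_filter]
      refine Finset.filter_congr fun p _ => ?_
      simp only [Finset.mem_Icc] at hk
      constructor
      · exact fun h => h.2
      · exact fun h => ⟨by omega, h⟩
    have step : ∑ k ∈ Finset.Icc 1 b,
          ((A.filter (fun p => d1 p = k)).card : ℝ) * (gfun k - gfun b)
        ≤ ∑ k ∈ Finset.Icc 1 b,
          ((A.filter (fun p => d2 p = k)).card : ℝ) * (gfun k - gfun b) := by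
      refine Finset.sum_le_sum fun k hk => ?_
      have hgk : gfun k - gfun b ≤ 0 := by
        have := gfun_mono (Finset.mem_Icc.mp hk).2
        linarith
      exact mul_le_mul_of_nonpos_right (by exact_mod_cast hcount k hk) hgk
    calc ∑ p ∈ A, (gfun (d1 p) - gfun b) = _ := LHS
      _ ≤ _ := step
      _ = ∑ k ∈ Finset.Icc 1 b,
          (((A.filter (fun p => d2 p ≤ b)).filter (fun p => d2 p = k)).card : ℝ)
            * (gfun k - gfun b) := by
          refine Finset.sum_congr rfl fun k hk => ?_
          rw [filt_eq k hk]
      _ = _ := RHS2.symm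
      _ ≤ _ := RHS1
  have e1 : ∑ p ∈ A, (gfun (d1 p) - gfun b)
      = ∑ p ∈ A, gfun (d1 p) - A.card * gfun b := by
    rw [Finset.sum_sub_distrib, Finset.sum_const, nsmul_eq_mul]
  have e2 : ∑ p ∈ A, (gfun (d2 p) - gfun b)
      = ∑ p ∈ A, gfun (d2 p) - A.card * gfun b := by
    rw [Finset.sum_sub_distrib, Finset.sum_const, nsmul_eq_mul]
  rw [e1, e2] at key
  linarith

theorem stmt13 (n b : ℕ) (hb : 1 ≤ b) (hn : 2 * b < n) (π : Fin n ≃ Fin n) :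
    mLogA (bandGraph n b) (fun i => (i : ℕ)) ≤
      mLogA (bandGraph n b) (fun i => (π i : ℕ)) := by
  classical
  set G := bandGraph n b with hG
  -- the adjacency pair set
  set A : Finset (Fin n × Fin n) :=
    Finset.univ.filter (fun p : Fin n × Fin n => G.Adj p.1 p.2) with hA
  -- rewriting of the numerator
  have numer : ∀ σ : Fin n → ℕ,
      (∑ v : Fin n, ∑ u ∈ G.neighborFinset v, Real.logb 2 (1 + |(σ u : ℝ) - (σ v : ℝ)|))
        = ∑ p ∈ A, gfun ((σ p.2 : ℤ) - (σ p.1 : ℤ)).natAbs := by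
    intro σ
    have hterm : ∀ (v u : Fin n), Real.logb 2 (1 + |(σ u : ℝ) - (σ v : ℝ)|)
        = gfun ((σ u : ℤ) - (σ v : ℤ)).natAbs := by
      intro v u
      unfold gfun
      congr 1
      rw [Nat.cast_natAbs]
      push_cast
      ring_nf
    rw [hA, Finset.sum_filter, Fintype.sum_prod_type]
    refine Finset.sum_congr rfl fun v _ => ?_
    rw [← Finset.sum_filter]
    have hN : Finset.univ.filter (fun y : Fin n => G.Adj (v, y).1 (v, y).2)
        = G.neighborFinset v := by
      ext u; simp [SimpleGraph.mem_neighborFinset]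
    rw [hN]
    exact Finset.sum_congr rfl fun u _ => hterm v u
  -- apply core lemma
  have hcore : ∑ p ∈ A, gfun (((p.2 : ℕ) : ℤ) - ((p.1 : ℕ) : ℤ)).natAbs
      ≤ ∑ p ∈ A, gfun (((π p.2 : ℕ) : ℤ) - ((π p.1 : ℕ) : ℤ)).natAbs := by
    apply core_lemma b A
    · intro p hp
      rw [hA, Finset.mem_filter] at hp
      have := (bandGraph_adj n b p.1 p.2).mp hp.2
      constructor
      · omega
      · omega
    · intro p hp
      rw [hA, Finset.mem_filter] at hp
      have hadj := (bandGraph_adj n b p.1 p.2).mp hp.2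
      have hne : p.1 ≠ p.2 := by
        intro h; rw [h] at hadj; simp at hadj
      have : π p.1 ≠ π p.2 := fun h => hne (π.injective h)
      have hval : (π p.1 : ℕ) ≠ (π p.2 : ℕ) := fun h => this (Fin.val_injective h)
      omega
    · intro k hk
      simp only [Finset.mem_Icc] at hk
      apply Finset.card_le_card_of_injOn (fun p => (π p.1, π p.2))
      · intro p hp
        rw [Finset.mem_coe, Finset.mem_filter] at hp ⊢
        obtain ⟨hpA, hd⟩ := hp
        refine ⟨?_, ?_⟩
        · rw [hA, Finset.mem_filter]
          refine ⟨Finset.mem_univ _, ?_⟩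
          rw [bandGraph_adj]
          dsimp only at hd ⊢
          constructor
          · omega
          · omega
        · exact hd
      · intro p hp q hq hpq
        simp only [Prod.mk.injEq] at hpq
        exact Prod.ext (π.injective hpq.1) (π.injective hpq.2)
  -- denominator positive
  have hpos : (0:ℝ) < 2 * (G.edgeFinset.card : ℝ) := by
    have h0 : (⟨0, by omega⟩ : Fin n) ≠ ⟨1, by omega⟩ := by
      intro h; simpa using congrArg Fin.val h
    have hadj : G.Adj ⟨0, by omega⟩ ⟨1, by omega⟩ := by
      rw [hG, bandGraph_adj]
      simp
      omega
    have : s((⟨0, by omega⟩ : Fin n), (⟨1, by omega⟩ : Fin n)) ∈ G.edgeFinset := by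
      rw [SimpleGraph.mem_edgeFinset]
      exact hadj
    have hcard : 0 < G.edgeFinset.card := Finset.card_pos.mpr ⟨_, this⟩
    have : (0:ℝ) < (G.edgeFinset.card : ℝ) := by exact_mod_cast hcard
    linarith
  unfold mLogA
  rw [numer (fun i => (i : ℕ)), numer (fun i => (π i : ℕ))]
  exact div_le_div_of_nonneg_right hcore (le_of_lt hpos)
end

section
/- For the wheel-type graph G_wheel(n, b_l, b_g) = B(n, b_l) + K_{b_g, n−b_g} (sum of a band graph on the n−b_g peripheral vertices plus b_g universal center vertices), with b_l, b_g ≥ 1, any ordering π has mLogGapA(G_wheel, π) ≥ 1 + c·log₂(n − b_g)/ d̄ for some constant c > 0 independent of n (for n sufficiently large), where d̄ = m/n is the average degree; in particular the optimal mLogGapA on G_wheel is bounded away from 1 by a term of order log₂(n)/d̄. -/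
open Finset
open scoped Classical

/-- wheel-type graph: the first `bg` vertices are universal centers, the remaining
vertices form a band graph with semi-bandwidth `bl` (linear arrangement). -/
def wheelGraph (n bl bg : ℕ) : SimpleGraph (Fin n) :=
  SimpleGraph.fromRel
    (fun i j => (i : ℕ) < bg ∨ ((i : ℤ) - (j : ℤ)).natAbs ≤ bl)

lemma gapTotal_cons_cons (a b : ℕ) (l : List ℕ) :
    gapTotal (a :: b :: l) = Real.logb 2 (1 + ((b - a : ℕ) : ℝ)) + gapTotal (b :: l) := by
  simp [gapTotal]

lemma gapTotal_nonneg (l : List ℕ) : 0 ≤ gapTotal l := by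
  apply List.sum_nonneg
  intro x hx
  simp only [List.mem_map] at hx
  obtain ⟨p, _, rfl⟩ := hx
  apply Real.logb_nonneg (by norm_num : (1:ℝ)<2)
  have : (0:ℝ) ≤ ((p.2 - p.1 : ℕ) : ℝ) := Nat.cast_nonneg _
  linarith

lemma gapTotal_ge_length (l : List ℕ) (h : List.Pairwise (· < ·) l) :
    (l.length : ℝ) - 1 ≤ gapTotal l := by
  induction l with
  | nil => simp [gapTotal_nil]
  | cons a l ih =>
    cases l with
    | nil => simp [gapTotal_single]
    | cons b l =>
      have hab : a < b := (List.pairwise_cons.mp h).1 b (by simp)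
      have h2 : List.Pairwise (· < ·) (b :: l) := (List.pairwise_cons.mp h).2
      have ih2 := ih h2
      rw [gapTotal_cons_cons]
      have h1 : (1:ℝ) ≤ Real.logb 2 (1 + ((b - a : ℕ) : ℝ)) := by
        have : (1:ℕ) ≤ b - a := by omega
        have h3 : (2:ℝ) ≤ 1 + ((b - a : ℕ) : ℝ) := by
          have h4 : (1:ℝ) ≤ ((b-a:ℕ):ℝ) := by exact_mod_cast this
          linarith
        calc (1:ℝ) = Real.logb 2 2 := by simp
        _ ≤ _ := Real.logb_le_logb_of_le (by norm_num) (by norm_num) h3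
      simp only [List.length_cons] at *
      push_cast at *
      linarith

lemma gapTotal_ge_logb (a y : ℕ) (l : List ℕ) (h : List.Pairwise (· < ·) (a :: l))
    (hy : y ∈ a :: l) :
    Real.logb 2 (1 + ((y - a : ℕ) : ℝ)) ≤ gapTotal (a :: l) := by
  induction l generalizing a with
  | nil =>
    simp at hy; subst hy; simp [gapTotal_single]
  | cons b l ih =>
    have hab : a < b := (List.pairwise_cons.mp h).1 b (by simp)
    have h2 : List.Pairwise (· < ·) (b :: l) := (List.pairwise_cons.mp h).2
    rw [gapTotal_cons_cons]
    rcases List.mem_cons.mp hy with rfl | hy'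
    · have := gapTotal_nonneg (b :: l)
      simp only [Nat.sub_self, Nat.cast_zero, add_zero, Real.logb_self_eq_one] at *
      have : Real.logb 2 (1 + ((b - y : ℕ):ℝ)) ≥ 0 := by
        apply Real.logb_nonneg (by norm_num : (1:ℝ)<2)
        have : (0:ℝ) ≤ ((b - y : ℕ) : ℝ) := Nat.cast_nonneg _
        linarith
      simp
      positivity
    · have hyb : b ≤ y := by
        rcases List.mem_cons.mp hy' with rfl | hy''
        · exact le_refl _
        · exact le_of_lt ((List.pairwise_cons.mp h2).1 y hy'')
      have ihb := ih b h2 hy'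
      have key : Real.logb 2 (1 + ((y - a : ℕ):ℝ)) ≤
          Real.logb 2 (1 + ((b - a : ℕ):ℝ)) + Real.logb 2 (1 + ((y - b : ℕ):ℝ)) := by
        rw [← Real.logb_mul (by positivity) (by positivity)]
        apply Real.logb_le_logb_of_le (by norm_num : (1:ℝ)<2) (by positivity)
        have e1 : ((y - a : ℕ):ℝ) = ((b - a : ℕ):ℝ) + ((y - b : ℕ):ℝ) := by
          push_cast [Nat.cast_sub (le_of_lt hab), Nat.cast_sub hyb,
            Nat.cast_sub (le_of_lt (lt_of_lt_of_le hab hyb))]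
          ring
        have n1 : (0:ℝ) ≤ ((b - a : ℕ):ℝ) := Nat.cast_nonneg _
        have n2 : (0:ℝ) ≤ ((y - b : ℕ):ℝ) := Nat.cast_nonneg _
        nlinarith
      linarith

lemma gapTotal_sort_card (s : Finset ℕ) :
    (s.card : ℝ) - 1 ≤ gapTotal (s.sort (· ≤ ·)) := by
  have := gapTotal_ge_length (s.sort (· ≤ ·)) (s.sortedLT_sort.pairwise)
  rwa [Finset.length_sort] at this

lemma gapTotal_sort_ge (s : Finset ℕ) {x y : ℕ} (hx : x ∈ s) (hy : y ∈ s) (hxy : x ≤ y) :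
    Real.logb 2 (1 + ((y - x : ℕ) : ℝ)) ≤ gapTotal (s.sort (· ≤ ·)) := by
  have hsorted := s.sortedLT_sort.pairwise
  have hmemx : x ∈ s.sort (· ≤ ·) := (Finset.mem_sort _).mpr hx
  have hmemy : y ∈ s.sort (· ≤ ·) := (Finset.mem_sort _).mpr hy
  cases hl : s.sort (· ≤ ·) with
  | nil => rw [hl] at hmemx; simp at hmemx
  | cons a l =>
    rw [hl] at hsorted hmemx hmemy
    have hax : a ≤ x := by
      rcases List.mem_cons.mp hmemx with rfl | h'
      · exact le_refl _
      · exact le_of_lt ((List.pairwise_cons.mp hsorted).1 x h')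
    have h1 := gapTotal_ge_logb a y l hsorted hmemy
    refine le_trans ?_ h1
    apply Real.logb_le_logb_of_le (by norm_num : (1:ℝ)<2) (by positivity)
    have h2 : y - x ≤ y - a := by omega
    have h3 : ((y-x:ℕ):ℝ) ≤ ((y-a:ℕ):ℝ) := by exact_mod_cast h2
    linarith

/-! ### auxiliary lemmas about `wheelGraph` -/

lemma wheel_adj {n bl bg : ℕ} (i j : Fin n) :
    (wheelGraph n bl bg).Adj i j ↔
      i ≠ j ∧ ((i:ℕ) < bg ∨ (j:ℕ) < bg ∨ ((i:ℤ) - (j:ℤ)).natAbs ≤ bl) := by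
  simp only [wheelGraph, SimpleGraph.fromRel_adj]
  constructor
  · rintro ⟨h, h2⟩; exact ⟨h, by omega⟩
  · rintro ⟨h, h2⟩; exact ⟨h, by omega⟩

lemma wheel_degree_le {n bl bg : ℕ} (v : Fin n) (hv : bg ≤ (v:ℕ)) :
    (wheelGraph n bl bg).degree v ≤ bg + 2 * bl := by
  rw [← SimpleGraph.card_neighborFinset_eq_degree]
  have hsub : ∀ u ∈ (wheelGraph n bl bg).neighborFinset v,
      (u:ℕ) ∈ Finset.range bg ∪ (Finset.Icc ((v:ℕ) - bl) ((v:ℕ) + bl)).erase (v:ℕ) := by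
    intro u hu
    rw [SimpleGraph.mem_neighborFinset, wheel_adj] at hu
    obtain ⟨hne, hcase⟩ := hu
    have hne' : (u:ℕ) ≠ (v:ℕ) := fun h => hne (Fin.ext h.symm)
    simp only [Finset.mem_union, Finset.mem_range, Finset.mem_erase, Finset.mem_Icc]
    omega
  calc ((wheelGraph n bl bg).neighborFinset v).card
      ≤ (Finset.range bg ∪ (Finset.Icc ((v:ℕ) - bl) ((v:ℕ) + bl)).erase (v:ℕ)).card :=
        Finset.card_le_card_of_injOn (fun u => (u:ℕ)) hsub (fun a _ b _ h => Fin.ext h)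
    _ ≤ bg + 2 * bl := by
        refine le_trans (Finset.card_union_le _ _) ?_
        have h1 : (Finset.range bg).card = bg := Finset.card_range bg
        have h2 : ((Finset.Icc ((v:ℕ) - bl) ((v:ℕ) + bl)).erase (v:ℕ)).card ≤ 2 * bl := by
          have hmem : (v:ℕ) ∈ Finset.Icc ((v:ℕ) - bl) ((v:ℕ) + bl) := by
            simp only [Finset.mem_Icc]; omega
          rw [Finset.card_erase_of_mem hmem, Nat.card_Icc]
          omega
        omega

lemma count_T (n bg D : ℕ) (hD : 1 ≤ D) (π : Fin n ≃ Fin n) (p0 : ℕ) :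
    (n - (bg + 1) - (2 * D - 1) : ℕ) ≤
      (Finset.univ.filter
        (fun u : Fin n => bg < (u:ℕ) ∧ D ≤ Nat.dist p0 ((π u : Fin n):ℕ))).card := by
  have hsplit := Finset.card_filter_add_card_filter_not
    (s := (Finset.univ : Finset (Fin n)))
    (p := fun u : Fin n => bg < (u:ℕ) ∧ D ≤ Nat.dist p0 ((π u : Fin n):ℕ))
  have hcard : (Finset.univ : Finset (Fin n)).card = n := by simp
  have hsub : Finset.univ.filter
      (fun u : Fin n => ¬ (bg < (u:ℕ) ∧ D ≤ Nat.dist p0 ((π u : Fin n):ℕ))) ⊆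
      Finset.univ.filter (fun u : Fin n => (u:ℕ) ≤ bg) ∪
      Finset.univ.filter (fun u : Fin n => Nat.dist p0 ((π u : Fin n):ℕ) < D) := by
    intro u hu
    simp only [Finset.mem_filter, Finset.mem_union, Finset.mem_univ, true_and,
      not_and_or, not_lt, not_le] at hu ⊢
    omega
  have h1 : (Finset.univ.filter (fun u : Fin n => (u:ℕ) ≤ bg)).card ≤ bg + 1 := by
    have := Finset.card_le_card_of_injOn (f := fun u : Fin n => (u:ℕ))
      (s := Finset.univ.filter (fun u : Fin n => (u:ℕ) ≤ bg))
      (t := Finset.range (bg + 1))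
      (by intro u hu
          simp only [Finset.mem_coe, Finset.mem_filter, Finset.mem_univ, true_and] at hu
          simp only [Finset.mem_coe, Finset.mem_range]; omega)
      (fun a _ b _ h => Fin.ext h)
    simpa using this
  have h2 : (Finset.univ.filter (fun u : Fin n => Nat.dist p0 ((π u : Fin n):ℕ) < D)).card
      ≤ 2 * D - 1 := by
    have := Finset.card_le_card_of_injOn (f := fun u : Fin n => ((π u : Fin n):ℕ))
      (s := Finset.univ.filter (fun u : Fin n => Nat.dist p0 ((π u : Fin n):ℕ) < D))
      (t := Finset.Icc (p0 - (D - 1)) (p0 + (D - 1)))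
      (by
        intro u hu
        rw [Finset.mem_coe, Finset.mem_filter] at hu
        simp only [Finset.mem_coe, Finset.mem_filter, Nat.dist, Finset.mem_univ, true_and] at hu
        simp only [Finset.mem_coe, Finset.mem_Icc]
        omega)
      (by
        intro a _ b _ h
        exact π.injective (Fin.ext h))
    refine le_trans this ?_
    rw [Nat.card_Icc]
    omega
  have hle : (Finset.univ.filter
      (fun u : Fin n => ¬ (bg < (u:ℕ) ∧ D ≤ Nat.dist p0 ((π u : Fin n):ℕ)))).card
      ≤ (bg + 1) + (2 * D - 1) :=
    le_trans (Finset.card_le_card hsub) (le_trans (Finset.card_union_le _ _) (by omega))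
  omega

set_option maxHeartbeats 1000000

theorem stmt14 (bl bg : ℕ) (hbl : 1 ≤ bl) (hbg : 1 ≤ bg) :
    ∃ c : ℝ, 0 < c ∧ ∃ N : ℕ, ∀ n : ℕ, N ≤ n → ∀ π : Fin n ≃ Fin n,
      1 + c * Real.logb 2 ((n : ℝ) - (bg : ℝ)) /
          ((2 * ((wheelGraph n bl bg).edgeFinset.card : ℝ)) / (n : ℝ)) ≤
        mLogGapA (wheelGraph n bl bg) (fun i => (π i : ℕ)) := by
  classical
  set K : ℕ := bg + 2 * bl with hK
  refine ⟨1/32, by norm_num, 4 * 2^(2*K) + 2*bg + 64, ?_⟩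
  intro n hn π
  set G := wheelGraph n bl bg with hG
  set p : Fin n → ℕ := fun i => ((π i : Fin n) : ℕ) with hp
  have hpinj : Function.Injective p := fun a b h => π.injective (Fin.ext h)
  have hpow : 64 ≤ 2^(2*K) := by
    have h6 : 6 ≤ 2*K := by omega
    calc (64:ℕ) = 2^6 := by norm_num
    _ ≤ 2^(2*K) := Nat.pow_le_pow_right (by norm_num) h6
  have hn2 : 2*bg + 64 ≤ n := le_trans (by omega) hn
  have hnP : 4 * 2^(2*K) + 2*bg + 64 ≤ n := hn
  set Pn : ℕ := n - bg with hPn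
  have hP : 4 * 2^(2*K) ≤ Pn := by omega
  set D : ℕ := Pn / 4 with hD
  have hD1 : 2^(2*K) ≤ D := by omega
  have hDpos : 1 ≤ D := by omega
  have hn0 : 0 < n := by omega
  set v0 : Fin n := ⟨0, hn0⟩ with hv0
  set p0 : ℕ := p v0 with hp0
  set E : ℕ := G.edgeFinset.card with hE
  have hEpos : 0 < E := by
    rw [hE, Finset.card_pos]
    refine ⟨s(v0, ⟨1, by omega⟩), ?_⟩
    rw [SimpleGraph.mem_edgeFinset, SimpleGraph.mem_edgeSet, hG, wheel_adj]
    constructor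
    · intro h; have := congrArg Fin.val h; simp [hv0] at this
    · left; simpa [hv0] using Nat.lt_of_lt_of_le Nat.zero_lt_one hbg
  have hdegsum : ∑ v : Fin n, G.degree v = 2 * E := by
    rw [hE]; exact SimpleGraph.sum_degrees_eq_twice_card_edges G
  set F : Fin n → ℝ := fun v => gapTotal (((G.neighborFinset v).image p).sort (· ≤ ·)) with hF
  have himgcard : ∀ v, ((G.neighborFinset v).image p).card = G.degree v := by
    intro v
    rw [Finset.card_image_of_injective _ hpinj, SimpleGraph.card_neighborFinset_eq_degree]
  have hFdeg : ∀ v, (G.degree v : ℝ) - 1 ≤ F v := by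
    intro v
    have h := gapTotal_sort_card ((G.neighborFinset v).image p)
    rwa [himgcard v] at h
  set T := Finset.univ.filter
    (fun u : Fin n => bg < (u:ℕ) ∧ D ≤ Nat.dist p0 ((π u : Fin n):ℕ)) with hT
  have hTcard : n - (bg + 1) - (2 * D - 1) ≤ T.card := count_T n bg D hDpos π p0
  set g : Fin n → Fin n := fun u => ⟨(u:ℕ) - 1, lt_of_le_of_lt (Nat.sub_le _ _) u.isLt⟩ with hg
  set S := T.image g with hS
  have hScard : S.card = T.card := by
    rw [hS]
    apply Finset.card_image_of_injOn
    intro a ha b hb hab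
    simp only [hT, Finset.coe_filter, Set.mem_setOf_eq] at ha hb
    have h1 : (a:ℕ) - 1 = (b:ℕ) - 1 := congrArg Fin.val hab
    have := ha.2.1; have := hb.2.1
    exact Fin.ext (by omega)
  set L : ℝ := Real.logb 2 (1 + (D:ℝ)) with hL
  have hgood : ∀ v ∈ S, L ≤ F v ∧ (G.degree v : ℝ) ≤ (K:ℝ) := by
    intro v hv
    rw [hS, Finset.mem_image] at hv
    obtain ⟨u, hu, rfl⟩ := hv
    rw [hT, Finset.mem_filter] at hu
    obtain ⟨-, hubg, hudist⟩ := hu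
    have hgv : ((g u : Fin n) : ℕ) = (u:ℕ) - 1 := rfl
    have hbv : bg ≤ ((g u : Fin n):ℕ) := by rw [hgv]; omega
    constructor
    · -- span bound
      have hadj0 : G.Adj (g u) v0 := by
        rw [hG, wheel_adj]
        constructor
        · intro h; have := congrArg Fin.val h; rw [hgv] at this; simp [hv0] at this; omega
        · right; left; simpa [hv0] using Nat.lt_of_lt_of_le Nat.zero_lt_one hbg
      have hadju : G.Adj (g u) u := by
        rw [hG, wheel_adj]
        constructor
        · intro h; have := congrArg Fin.val h; rw [hgv] at this; omega
        · right; right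
          have : (((g u : Fin n):ℕ):ℤ) - ((u:ℕ):ℤ) = -1 := by
            rw [hgv]; push_cast [Nat.cast_sub (by omega : 1 ≤ (u:ℕ))]; ring
          rw [this]
          simpa using hbl
      have hm0 : p v0 ∈ (G.neighborFinset (g u)).image p :=
        Finset.mem_image_of_mem p (by rw [SimpleGraph.mem_neighborFinset]; exact hadj0)
      have hmu : p u ∈ (G.neighborFinset (g u)).image p :=
        Finset.mem_image_of_mem p (by rw [SimpleGraph.mem_neighborFinset]; exact hadju)
      have hdist : D ≤ Nat.dist p0 (p u) := hudist
      rcases le_total p0 (p u) with hc | hc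
      · have h1 := gapTotal_sort_ge ((G.neighborFinset (g u)).image p) hm0 hmu hc
        refine le_trans ?_ h1
        apply Real.logb_le_logb_of_le (by norm_num : (1:ℝ)<2) (by positivity)
        have h2 : D ≤ p u - p0 := by
          simp only [Nat.dist] at hdist; omega
        have h3 : (D:ℝ) ≤ ((p u - p0 : ℕ):ℝ) := by exact_mod_cast h2
        linarith
      · have h1 := gapTotal_sort_ge ((G.neighborFinset (g u)).image p) hmu hm0 hc
        refine le_trans ?_ h1
        apply Real.logb_le_logb_of_le (by norm_num : (1:ℝ)<2) (by positivity)
        have h2 : D ≤ p0 - p u := by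
          simp only [Nat.dist] at hdist; omega
        have h3 : (D:ℝ) ≤ ((p0 - p u : ℕ):ℝ) := by exact_mod_cast h2
        linarith
    · have hdle := wheel_degree_le (n := n) (bl := bl) (bg := bg) (g u) hbv
      rw [← hG] at hdle
      rw [hK]
      exact_mod_cast Nat.cast_le.mpr hdle
  -- numeric facts
  have hLK : 2*(K:ℝ) ≤ L := by
    rw [hL, Real.le_logb_iff_rpow_le (by norm_num : (1:ℝ)<2) (by positivity)]
    have e : (2:ℝ) ^ (2*(K:ℝ)) = ((2^(2*K) : ℕ):ℝ) := by
      rw [show 2*(K:ℝ) = ((2*K : ℕ):ℝ) by push_cast; ring, Real.rpow_natCast]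
      push_cast; ring
    rw [e]
    have : ((2^(2*K):ℕ):ℝ) ≤ (D:ℝ) := Nat.cast_le.mpr hD1
    linarith
  have hL0 : 0 ≤ L := by
    rw [hL]; apply Real.logb_nonneg (by norm_num : (1:ℝ)<2)
    have : (0:ℝ) ≤ (D:ℝ) := Nat.cast_nonneg _
    linarith
  have hPnR : ((Pn:ℕ):ℝ) = (n:ℝ) - (bg:ℝ) := by
    rw [hPn]; push_cast [Nat.cast_sub (by omega : bg ≤ n)]; ring
  have h16 : (16:ℝ) ≤ (Pn:ℝ) := by
    have : 16 ≤ Pn := by omega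
    exact_mod_cast this
  have hlogb4 : Real.logb 2 (4:ℝ) = 2 := by
    rw [show (4:ℝ) = 2^(2:ℕ) by norm_num, Real.logb_pow]
    simp [Real.logb_self_eq_one]
  have hlbP4 : Real.logb 2 ((Pn:ℝ)) - 2 ≤ L := by
    have hPnD : (Pn:ℝ)/4 ≤ 1 + (D:ℝ) := by
      have h4 : Pn < 4 * D + 4 := by omega
      have h4R : (Pn:ℝ) < 4*(D:ℝ) + 4 := by exact_mod_cast h4
      linarith
    have hmono : Real.logb 2 ((Pn:ℝ)/4) ≤ L := by
      rw [hL]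
      apply Real.logb_le_logb_of_le (by norm_num : (1:ℝ)<2) (by positivity) hPnD
    rw [Real.logb_div (by positivity) (by norm_num), hlogb4] at hmono
    exact hmono
  have h4lb : (4:ℝ) ≤ Real.logb 2 ((Pn:ℝ)) := by
    rw [Real.le_logb_iff_rpow_le (by norm_num : (1:ℝ)<2) (by positivity)]
    rw [show (4:ℝ) = ((4:ℕ):ℝ) by norm_num, Real.rpow_natCast]
    norm_num
    linarith
  have hlb2L : Real.logb 2 ((Pn:ℝ)) ≤ 2 * L := by linarith
  have hlb0 : 0 ≤ Real.logb 2 ((Pn:ℝ)) := by linarith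
  have hcardS : (n:ℝ)/4 ≤ (S.card:ℝ) := by
    have hnat : n ≤ 4 * (n - (bg + 1) - (2 * D - 1)) := by omega
    have h1 : n ≤ 4 * T.card := le_trans hnat (by omega)
    rw [hScard]
    have h1R : (n:ℝ) ≤ 4 * (T.card:ℝ) := by exact_mod_cast h1
    linarith
  -- per-vertex extra bound
  have hextra : ∀ v ∈ S, (L - (K:ℝ))/2 ≤ F v - ((G.degree v:ℝ) - 1) := by
    intro v hv
    obtain ⟨h1, h2⟩ := hgood v hv
    have h3 := hFdeg v
    linarith
  have hnonneg : ∀ v : Fin n, 0 ≤ F v - ((G.degree v:ℝ) - 1) := fun v => by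
    have := hFdeg v; linarith
  have hsum1 : ∑ v ∈ S, (F v - ((G.degree v:ℝ)-1)) ≤
      ∑ v : Fin n, (F v - ((G.degree v:ℝ)-1)) :=
    Finset.sum_le_sum_of_subset_of_nonneg (Finset.subset_univ S)
      (fun v _ _ => hnonneg v)
  have hsum2 : (S.card : ℝ) * ((L - (K:ℝ))/2) ≤ ∑ v ∈ S, (F v - ((G.degree v:ℝ)-1)) := by
    have := Finset.card_nsmul_le_sum S (fun v => F v - ((G.degree v:ℝ)-1)) ((L - (K:ℝ))/2)
      hextra
    simpa [nsmul_eq_mul] using this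
  have hdegsumR : ∑ v : Fin n, ((G.degree v:ℝ) - 1) = 2*(E:ℝ) - (n:ℝ) := by
    rw [Finset.sum_sub_distrib]
    have h1 : ∑ v : Fin n, ((G.degree v : ℕ):ℝ) = ((∑ v : Fin n, G.degree v : ℕ):ℝ) := by
      push_cast; ring
    rw [h1, hdegsum]
    push_cast
    simp
  have htotal : 2*(E:ℝ) + (S.card:ℝ)*((L-(K:ℝ))/2) ≤ ∑ v : Fin n, vertexGap G p v := by
    have h1 : ∑ v : Fin n, vertexGap G p v = (n:ℝ) + ∑ v : Fin n, F v := by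
      unfold vertexGap
      rw [Finset.sum_add_distrib]
      simp [hF]
    have h2 : ∑ v : Fin n, F v = ∑ v : Fin n, (F v - ((G.degree v:ℝ)-1)) +
        ∑ v : Fin n, ((G.degree v:ℝ) - 1) := by
      rw [← Finset.sum_add_distrib]; apply Finset.sum_congr rfl; intros; ring
    rw [h1, h2, hdegsumR]
    have := le_trans hsum2 hsum1
    linarith
  -- final assembly
  have hMpos : (0:ℝ) < 2*(E:ℝ) := by
    have : (0:ℝ) < (E:ℝ) := by exact_mod_cast hEpos
    linarith
  have hnR : (0:ℝ) < (n:ℝ) := by exact_mod_cast hn0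
  set lb : ℝ := Real.logb 2 ((n:ℝ) - (bg:ℝ)) with hlb
  have hlbPn : lb = Real.logb 2 ((Pn:ℝ)) := by rw [hlb, hPnR]
  clear_value G p v0 p0 E F T g S L lb
  have hkey : 2*(E:ℝ) + (1/32) * lb * (n:ℝ) ≤ ∑ v : Fin n, vertexGap G p v := by
    refine le_trans ?_ htotal
    have hfac : lb/8 ≤ (L - (K:ℝ))/2 := by
      rw [hlbPn]; linarith
    have hfac0 : 0 ≤ lb/8 := by rw [hlbPn]; linarith
    have hS0 : (0:ℝ) ≤ (S.card:ℝ) := Nat.cast_nonneg _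
    have := mul_le_mul hcardS hfac hfac0 hS0
    linarith
  have hgoal : 1 + 1/32 * lb / (2 * (E:ℝ) / (n:ℝ)) =
      (2*(E:ℝ) + (1/32) * lb * (n:ℝ)) / (2*(E:ℝ)) := by
    rw [div_div_eq_mul_div, add_div, div_self (ne_of_gt hMpos)]
  have hMLG : mLogGapA G p = (∑ v : Fin n, vertexGap G p v) / (2*(E:ℝ)) := by
    unfold mLogGapA
    rw [hE]
  have hfrac : (2*(E:ℝ) + (1/32) * lb * (n:ℝ)) / (2*(E:ℝ)) ≤
      (∑ v : Fin n, vertexGap G p v) / (2*(E:ℝ)) := by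
    gcongr
  rw [hMLG, hgoal]
  exact hfrac
end
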